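/- Let S ∈ L²(-1,1), T, U continuous on [−1,1], V measurable with ∫_{-1}^1 V²(1−x²)dx < ∞. Set c₁ := (∫_{-1}^1 e^{4U}(1−x²)dx)^{1/2} > 0, c₂ := ∫_{-1}^1 ST dx, c₃ := (1/√2)∫_{-1}^1 S dx, M₁ := max{0, 4−c₃⁴}, M₂ := max{0, (√M₁ − 2|c₂|)/c₁}. If (∫_{-1}^1 [V e^{2U}(1−x²) − 2ST] dx)² + (1/4)(∫_{-1}^1 S dx)⁴ ≥ 4, then ∫_{-1}^1 V²(1−x²) dx ≥ M₂². -/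

import Mathlib

open Real Set MeasureTheory intervalIntegral

/-- If (∫ [V e^{2U}(1−x²) − 2ST] dx)² + (1/4)(∫ S dx)⁴ ≥ 4, then
∫ V²(1−x²) dx ≥ M₂², with c₁, c₂, c₃, M₁, M₂ as in the paper. -/
theorem stmt_4 (S T U V : ℝ → ℝ)
    (hS : IntervalIntegrable (fun x => (S x)^2) volume (-1) 1)
    (hT : ContinuousOn T (Icc (-1:ℝ) 1))
    (hU : ContinuousOn U (Icc (-1:ℝ) 1))
    (hVmeas : Measurable V)
    (hV2 : IntervalIntegrable (fun x => (V x)^2 * (1 - x^2)) volume (-1) 1)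
    (c₁ c₂ c₃ M₁ M₂ : ℝ)
    (hc₁ : c₁ = Real.sqrt (∫ x in (-1:ℝ)..1, Real.exp (4 * U x) * (1 - x^2)))
    (hc₁pos : 0 < c₁)
    (hc₂ : c₂ = ∫ x in (-1:ℝ)..1, S x * T x)
    (hc₃ : c₃ = (1 / Real.sqrt 2) * ∫ x in (-1:ℝ)..1, S x)
    (hM₁ : M₁ = max 0 (4 - c₃^4))
    (hM₂ : M₂ = max 0 ((Real.sqrt M₁ - 2 * |c₂|) / c₁))
    (hyp : (∫ x in (-1:ℝ)..1, (V x * Real.exp (2 * U x) * (1 - x^2) - 2 * S x * T x))^2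
        + (1/4) * (∫ x in (-1:ℝ)..1, S x)^4 ≥ 4) :
    (∫ x in (-1:ℝ)..1, (V x)^2 * (1 - x^2)) ≥ M₂^2 := by
  set I : ℝ := ∫ x in (-1:ℝ)..1, (V x)^2 * (1 - x^2) with hIdef
  have hI0 : 0 ≤ I := by
    apply intervalIntegral.integral_nonneg (by norm_num)
    intro x hx
    have h1 : x^2 ≤ 1 := by
      rcases hx with ⟨h1, h2⟩
      nlinarith
    have := sq_nonneg (V x)
    nlinarith
  have hsqI : 0 ≤ Real.sqrt I := Real.sqrt_nonneg I
  -- c₃^4 = (1/4) (∫ S)^4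
  have hc34 : c₃^4 = (1/4) * (∫ x in (-1:ℝ)..1, S x)^4 := by
    have h2 : (Real.sqrt 2)^2 = 2 := Real.sq_sqrt (by norm_num)
    have h4 : (Real.sqrt 2)^4 = 4 := by nlinarith
    rw [hc₃, mul_pow, div_pow, one_pow, h4]
  by_cases hM10 : 4 - c₃^4 ≤ 0
  · -- degenerate case: M₂ = 0
    have hM₁0 : M₁ = 0 := by rw [hM₁, max_eq_left hM10]
    have hM₂0 : M₂ = 0 := by
      rw [hM₂, hM₁0, Real.sqrt_zero]
      apply max_eq_left
      apply div_nonpos_of_nonpos_of_nonneg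
      · have := abs_nonneg c₂; linarith
      · exact le_of_lt hc₁pos
    rw [hM₂0]; simpa using hI0
  push_neg at hM10
  -- the key quantity B
  set B : ℝ := ∫ x in (-1:ℝ)..1, (V x * Real.exp (2 * U x) * (1 - x^2) - 2 * S x * T x) with hBdef
  have hB2 : B^2 ≥ 4 - c₃^4 := by rw [hc34]; linarith
  have hBne : B ≠ 0 := by
    intro h
    rw [h] at hB2
    simp at hB2
    linarith
  set A : ℝ := ∫ x in (-1:ℝ)..1, V x * Real.exp (2 * U x) * (1 - x^2) with hAdef
  -- the restricted measure
  set μ : Measure ℝ := volume.restrict (Set.Ioc (-1:ℝ) 1) with hμdef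
  have hIoc_Icc : Set.Ioc (-1:ℝ) 1 ⊆ Set.Icc (-1:ℝ) 1 := Set.Ioc_subset_Icc_self
  set f : ℝ → ℝ := fun x => |V x| * Real.sqrt (1 - x^2) with hfdef
  set g : ℝ → ℝ := fun x => Real.exp (2 * U x) * Real.sqrt (1 - x^2) with hgdef
  have hfmeas : AEStronglyMeasurable f μ := by
    apply Measurable.aestronglyMeasurable
    exact (hVmeas.abs.mul ((measurable_const.sub (measurable_id.pow_const 2)).sqrt))
  have hgmeas : AEStronglyMeasurable g μ := by
    apply ContinuousOn.aestronglyMeasurable _ measurableSet_Ioc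
    apply ContinuousOn.mul
    · exact (Real.continuous_exp.comp_continuousOn ((continuousOn_const.mul hU).mono hIoc_Icc))
    · exact ((continuous_const.sub (continuous_pow 2)).sqrt).continuousOn
  have hsq_nonneg : ∀ x ∈ Set.Ioc (-1:ℝ) 1, (0:ℝ) ≤ 1 - x^2 := by
    intro x hx; rcases hx with ⟨h1, h2⟩; nlinarith
  have hf2 : ∀ x ∈ Set.Ioc (-1:ℝ) 1, f x ^ 2 = (V x)^2 * (1 - x^2) := by
    intro x hx
    simp only [hfdef, mul_pow, sq_abs, Real.sq_sqrt (hsq_nonneg x hx)]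
  have hg2 : ∀ x ∈ Set.Ioc (-1:ℝ) 1, g x ^ 2 = Real.exp (4 * U x) * (1 - x^2) := by
    intro x hx
    have hexp : Real.exp (2 * U x) ^ 2 = Real.exp (4 * U x) := by
      rw [sq, ← Real.exp_add]; ring_nf
    simp only [hgdef, mul_pow, Real.sq_sqrt (hsq_nonneg x hx), hexp]
  have hf2int : Integrable (fun x => f x ^ 2) μ := by
    apply Integrable.congr hV2.1
    filter_upwards [ae_restrict_mem measurableSet_Ioc] with x hx
    exact (hf2 x hx).symm
  have hg2int : Integrable (fun x => g x ^ 2) μ := by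
    have hcont : ContinuousOn (fun x => Real.exp (4 * U x) * (1 - x^2)) (Set.Icc (-1:ℝ) 1) := by
      apply ContinuousOn.mul
      · exact Real.continuous_exp.comp_continuousOn (continuousOn_const.mul hU)
      · exact (continuous_const.sub (continuous_pow 2)).continuousOn
    have hint : IntegrableOn (fun x => Real.exp (4 * U x) * (1 - x^2)) (Set.Ioc (-1:ℝ) 1) :=
      (hcont.integrableOn_Icc).mono_set hIoc_Icc
    apply Integrable.congr hint
    filter_upwards [ae_restrict_mem measurableSet_Ioc] with x hx
    exact (hg2 x hx).symm
  have hfL2 : MemLp f 2 μ := (memLp_two_iff_integrable_sq hfmeas).2 hf2int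
  have hgL2 : MemLp g 2 μ := (memLp_two_iff_integrable_sq hgmeas).2 hg2int
  have hfg_int : Integrable (fun x => f x * g x) μ := by
    apply Integrable.mono' (((hf2int.add hg2int).div_const 2)) (hfmeas.mul hgmeas)
    apply Filter.Eventually.of_forall
    intro x
    have hfx : 0 ≤ f x := mul_nonneg (abs_nonneg _) (Real.sqrt_nonneg _)
    have hgx : 0 ≤ g x := mul_nonneg (Real.exp_pos _).le (Real.sqrt_nonneg _)
    simp only [Real.norm_eq_abs, Pi.mul_apply, Pi.add_apply, abs_mul,
      abs_of_nonneg hfx, abs_of_nonneg hgx]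
    nlinarith [sq_nonneg (f x - g x)]
  -- |V e^{2U}(1-x²)| = f·g on Ioc
  have habs_eq : ∀ x ∈ Set.Ioc (-1:ℝ) 1,
      |V x * Real.exp (2 * U x) * (1 - x^2)| = f x * g x := by
    intro x hx
    have h1 : (0:ℝ) ≤ 1 - x^2 := hsq_nonneg x hx
    have h2 : Real.sqrt (1 - x^2) * Real.sqrt (1 - x^2) = 1 - x^2 :=
      Real.mul_self_sqrt h1
    have h3 : f x * g x = |V x| * Real.exp (2 * U x) *
        (Real.sqrt (1 - x^2) * Real.sqrt (1 - x^2)) := by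
      simp only [hfdef, hgdef]; ring
    rw [abs_mul, abs_mul, abs_of_nonneg (Real.exp_pos _).le, abs_of_nonneg h1, h3, h2]
  have hVeU_int : IntervalIntegrable (fun x => V x * Real.exp (2 * U x) * (1 - x^2))
      volume (-1) 1 := by
    rw [intervalIntegrable_iff_integrableOn_Ioc_of_le (by norm_num)]
    have hexp : AEStronglyMeasurable (fun x => Real.exp (2 * U x)) μ :=
      ContinuousOn.aestronglyMeasurable
        (Real.continuous_exp.comp_continuousOn ((continuousOn_const.mul hU).mono hIoc_Icc))
        measurableSet_Ioc
    have hmeas : AEStronglyMeasurable (fun x => V x * Real.exp (2 * U x) * (1 - x^2)) μ :=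
      (hVmeas.aestronglyMeasurable.mul hexp).mul
        ((continuous_const.sub (continuous_pow 2)).aestronglyMeasurable)
    apply Integrable.mono' hfg_int hmeas
    filter_upwards [ae_restrict_mem measurableSet_Ioc] with x hx
    rw [Real.norm_eq_abs, habs_eq x hx]
  -- split B = A - 2 c₂
  have hint_B : IntervalIntegrable
      (fun x => V x * Real.exp (2 * U x) * (1 - x^2) - 2 * S x * T x) volume (-1) 1 := by
    by_contra h
    exact hBne (intervalIntegral.integral_undef h)
  have hST2 : IntervalIntegrable (fun x => 2 * S x * T x) volume (-1) 1 := by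
    have h2 := hVeU_int.sub hint_B
    simpa using h2
  have hB_split : B = A - 2 * c₂ := by
    rw [hBdef, intervalIntegral.integral_sub hVeU_int hST2, hc₂, hAdef]
    congr 1
    rw [← intervalIntegral.integral_const_mul]
    congr 1
    funext x
    ring
  -- Cauchy–Schwarz: |A| ≤ c₁ √I
  have hr2 : ∀ y : ℝ, y ^ (2:ℝ) = y ^ 2 := by
    intro y
    rw [show (2:ℝ) = ((2:ℕ):ℝ) by norm_num, Real.rpow_natCast]
  have hAbound : |A| ≤ c₁ * Real.sqrt I := by
    have hA_eq : A = ∫ x, V x * Real.exp (2 * U x) * (1 - x^2) ∂μ :=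
      intervalIntegral.integral_of_le (by norm_num)
    have h1 : |A| ≤ ∫ x, |V x * Real.exp (2 * U x) * (1 - x^2)| ∂μ := by
      rw [hA_eq]
      exact MeasureTheory.abs_integral_le_integral_abs (μ := μ)
          (f := fun x => V x * Real.exp (2 * U x) * (1 - x^2))
    have h2 : (∫ x, |V x * Real.exp (2 * U x) * (1 - x^2)| ∂μ) = ∫ x, f x * g x ∂μ := by
      apply MeasureTheory.integral_congr_ae
      filter_upwards [ae_restrict_mem measurableSet_Ioc] with x hx
      exact habs_eq x hx
    have hconj : Real.HolderConjugate 2 2 := ⟨by norm_num, by norm_num, by norm_num⟩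
    have hof : ENNReal.ofReal (2:ℝ) = 2 := by
      rw [ENNReal.ofReal_ofNat]
    have h3 := MeasureTheory.integral_mul_le_Lp_mul_Lq_of_nonneg hconj
      (f := f) (g := g) (μ := μ)
      (Filter.Eventually.of_forall fun x => mul_nonneg (abs_nonneg _) (Real.sqrt_nonneg _))
      (Filter.Eventually.of_forall fun x => mul_nonneg (Real.exp_pos _).le (Real.sqrt_nonneg _))
      (hof ▸ hfL2) (hof ▸ hgL2)
    simp only [hr2] at h3
    have hf_eq : (∫ x, f x ^ 2 ∂μ) = I := by
      have : (∫ x, f x ^ 2 ∂μ) = ∫ x, (V x)^2 * (1 - x^2) ∂μ := by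
        apply MeasureTheory.integral_congr_ae
        filter_upwards [ae_restrict_mem measurableSet_Ioc] with x hx
        exact hf2 x hx
      rw [this, hIdef, intervalIntegral.integral_of_le (by norm_num : (-1:ℝ) ≤ 1)]
    have hg_eq : (∫ x, g x ^ 2 ∂μ) = ∫ x in (-1:ℝ)..1, Real.exp (4 * U x) * (1 - x^2) := by
      have : (∫ x, g x ^ 2 ∂μ) = ∫ x, Real.exp (4 * U x) * (1 - x^2) ∂μ := by
        apply MeasureTheory.integral_congr_ae
        filter_upwards [ae_restrict_mem measurableSet_Ioc] with x hx
        exact hg2 x hx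
      rw [this, intervalIntegral.integral_of_le (by norm_num : (-1:ℝ) ≤ 1)]
    rw [hf_eq, hg_eq, ← Real.sqrt_eq_rpow, ← Real.sqrt_eq_rpow] at h3
    calc |A| ≤ ∫ x, f x * g x ∂μ := h2 ▸ h1
      _ ≤ Real.sqrt I * Real.sqrt (∫ x in (-1:ℝ)..1, Real.exp (4 * U x) * (1 - x^2)) := h3
      _ = c₁ * Real.sqrt I := by rw [hc₁]; ring
  -- finish
  have hM1leB2 : M₁ ≤ B^2 := by
    rw [hM₁]
    exact max_le (sq_nonneg B) (by linarith)
  have hsqM1 : Real.sqrt M₁ ≤ |B| := by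
    calc Real.sqrt M₁ ≤ Real.sqrt (B^2) := Real.sqrt_le_sqrt hM1leB2
      _ = |B| := Real.sqrt_sq_eq_abs B
  have hBle : |B| ≤ c₁ * Real.sqrt I + 2 * |c₂| := by
    rw [hB_split]
    have h1 : |A - 2 * c₂| ≤ |A| + |2 * c₂| := abs_sub A (2 * c₂)
    have h2 : |2 * c₂| = 2 * |c₂| := by rw [abs_mul, abs_two]
    linarith
  have hdiv : (Real.sqrt M₁ - 2 * |c₂|) / c₁ ≤ Real.sqrt I := by
    rw [div_le_iff₀ hc₁pos]
    nlinarith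
  have hM2le : M₂ ≤ Real.sqrt I := by
    rw [hM₂]
    exact max_le hsqI hdiv
  have hM2nonneg : 0 ≤ M₂ := by rw [hM₂]; exact le_max_left _ _
  calc M₂^2 ≤ (Real.sqrt I)^2 := pow_le_pow_left₀ hM2nonneg hM2le 2
    _ = I := Real.sq_sqrt hI0
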